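/- Let A be a commutative ring and S ⊆ A a multiplicative set. If Q is a strongly weakly S-prime ideal of A (disjoint from S) that is not S-prime, then Q² = 0. -/

import Mathlib

/-- A strongly weakly S-prime ideal that is not S-prime satisfies Q² = 0. -/
theorem stmt_7 {A : Type*} [CommRing A] (S : Set A)
    (hS : ∀ a ∈ S, ∀ b ∈ S, a * b ∈ S) (Q : Ideal A)
    (hdisj : (Q : Set A) ∩ S = ∅)
    (hsw : ∃ s ∈ S, ∀ I J : Ideal A, I * J ≠ ⊥ → I * J ≤ Q →
        (∀ x ∈ I, s * x ∈ Q) ∨ (∀ x ∈ J, s * x ∈ Q))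
    (hns : ¬ ∃ s ∈ S, ∀ x y : A, x * y ∈ Q → s * x ∈ Q ∨ s * y ∈ Q) :
    Q * Q = ⊥ := by
  by_contra hQ2
  obtain ⟨s, hsS, hs⟩ := hsw
  apply hns
  refine ⟨s, hsS, fun x y hxy => ?_⟩
  set I := Ideal.span {x} ⊔ Q with hI
  set J := Ideal.span {y} ⊔ Q with hJ
  have hIJle : I * J ≤ Q := by
    rw [hI, hJ, Ideal.sup_mul, Ideal.mul_sup, Ideal.mul_sup]
    refine sup_le (sup_le ?_ ?_) (sup_le ?_ ?_)
    · rw [Ideal.span_singleton_mul_span_singleton]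
      exact (Ideal.span_singleton_le_iff_mem Q).mpr hxy
    · exact Ideal.mul_le_right
    · exact Ideal.mul_le_left
    · exact Ideal.mul_le_right
  have hIJne : I * J ≠ ⊥ := by
    intro h
    apply hQ2
    have : Q * Q ≤ I * J := mul_le_mul' le_sup_right le_sup_right
    rw [h] at this
    exact le_bot_iff.mp this
  rcases hs I J hIJne hIJle with h | h
  · exact Or.inl (h x (le_sup_left (a := Ideal.span {x}) (Ideal.subset_span rfl)))
  · exact Or.inr (h y (le_sup_left (a := Ideal.span {y}) (Ideal.subset_span rfl)))
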